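/- Under the Bounded-Coefficient Scheme Hypotheses, assume additionally that all the maps T_1, …, T_m and I_1, …, I_m are continuous. Then for each i = 1, …, m, lim_{n→∞} ‖x_n − T_iⁿ y_n‖ = 0. -/

import Mathlib

open Filter


lemma uc_combo (X : Type*) [NormedAddCommGroup X] [NormedSpace ℝ X] [UniformConvexSpace X]
    {ε : ℝ} (hε : 0 < ε) :
    ∃ δ : ℝ, 0 < δ ∧ δ ≤ 1 ∧ ∀ (u v : X) (R L : ℝ), 0 < R → ‖u‖ ≤ R → ‖v‖ ≤ R →
      ε * R ≤ ‖u - v‖ → 0 ≤ L → L ≤ 1 →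
      ‖L • u + (1 - L) • v‖ ≤ R * (1 - min L (1 - L) * δ) := by
  obtain ⟨δ0, hδ0, h⟩ := exists_forall_closed_ball_dist_add_le_two_sub X hε
  refine ⟨min δ0 1, lt_min hδ0 one_pos, min_le_right _ _, ?_⟩
  intro u v R L hR hu hv huv hL0 hL1
  set δ := min δ0 1 with hδdef
  have hδ1 : δ ≤ 1 := min_le_right _ _
  have hδpos : 0 < δ := lt_min hδ0 one_pos
  set x := R⁻¹ • u with hx
  set y := R⁻¹ • v with hy
  have hRinv : 0 ≤ R⁻¹ := inv_nonneg.2 hR.le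
  have hxn : ‖x‖ ≤ 1 := by
    rw [hx, norm_smul, Real.norm_of_nonneg hRinv, inv_mul_le_iff₀ hR, mul_one]; exact hu
  have hyn : ‖y‖ ≤ 1 := by
    rw [hy, norm_smul, Real.norm_of_nonneg hRinv, inv_mul_le_iff₀ hR, mul_one]; exact hv
  have hxy : ε ≤ ‖x - y‖ := by
    rw [hx, hy, ← smul_sub, norm_smul, Real.norm_of_nonneg hRinv, le_inv_mul_iff₀ hR]
    linarith
  have hsum : ‖x + y‖ ≤ 2 - δ := le_trans (h hxn hyn hxy) (by
    have : δ ≤ δ0 := min_le_left _ _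
    linarith)
  have key : ‖L • x + (1 - L) • y‖ ≤ 1 - min L (1 - L) * δ := by
    rcases le_total L (1 - L) with hc | hc
    · have h2L : 0 ≤ 1 - 2 * L := by linarith
      have heq : L • x + (1 - L) • y = L • (x + y) + (1 - 2 * L) • y := by module
      rw [heq, min_eq_left hc]
      have e1 : L * ‖x + y‖ ≤ L * (2 - δ) := mul_le_mul_of_nonneg_left hsum hL0
      have e2 : (1 - 2 * L) * ‖y‖ ≤ (1 - 2 * L) * 1 := mul_le_mul_of_nonneg_left hyn h2L
      calc ‖L • (x + y) + (1 - 2 * L) • y‖ ≤ ‖L • (x + y)‖ + ‖(1 - 2 * L) • y‖ := norm_add_le _ _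
        _ = L * ‖x + y‖ + (1 - 2 * L) * ‖y‖ := by
            rw [norm_smul, norm_smul, Real.norm_of_nonneg hL0, Real.norm_of_nonneg h2L]
        _ ≤ 1 - L * δ := by nlinarith
    · have h2L : 0 ≤ 2 * L - 1 := by linarith
      have h1L : (0:ℝ) ≤ 1 - L := by linarith
      have heq : L • x + (1 - L) • y = (1 - L) • (x + y) + (2 * L - 1) • x := by module
      rw [heq, min_eq_right hc]
      have e1 : (1 - L) * ‖x + y‖ ≤ (1 - L) * (2 - δ) := mul_le_mul_of_nonneg_left hsum h1L
      have e2 : (2 * L - 1) * ‖x‖ ≤ (2 * L - 1) * 1 := mul_le_mul_of_nonneg_left hxn h2L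
      calc ‖(1 - L) • (x + y) + (2 * L - 1) • x‖
          ≤ ‖(1 - L) • (x + y)‖ + ‖(2 * L - 1) • x‖ := norm_add_le _ _
        _ = (1 - L) * ‖x + y‖ + (2 * L - 1) * ‖x‖ := by
            rw [norm_smul, norm_smul, Real.norm_of_nonneg h1L, Real.norm_of_nonneg h2L]
        _ ≤ 1 - (1 - L) * δ := by nlinarith
  have hux : u = R • x := by rw [hx, smul_smul, mul_inv_cancel₀ hR.ne', one_smul]
  have hvy : v = R • y := by rw [hy, smul_smul, mul_inv_cancel₀ hR.ne', one_smul]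
  calc ‖L • u + (1 - L) • v‖ = ‖R • (L • x + (1 - L) • y)‖ := by
        rw [hux, hvy, smul_add, smul_comm L R, smul_comm (1 - L) R]
    _ = R * ‖L • x + (1 - L) • y‖ := by rw [norm_smul, Real.norm_of_nonneg hR.le]
    _ ≤ R * (1 - min L (1 - L) * δ) := mul_le_mul_of_nonneg_left key hR.le

lemma schu {X : Type*} [NormedAddCommGroup X] [NormedSpace ℝ X] [UniformConvexSpace X]
    {c ac : ℝ} (hc : 0 ≤ c) (hac : 0 < ac)
    {L : ℕ → ℝ} (hL : ∀ n, ac ≤ L n ∧ ac ≤ 1 - L n)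
    {u v : ℕ → X}
    (hu : ∀ ε > 0, ∀ᶠ n in atTop, ‖u n‖ ≤ c + ε)
    (hv : ∀ ε > 0, ∀ᶠ n in atTop, ‖v n‖ ≤ c + ε)
    (hlim : Tendsto (fun n => ‖L n • u n + (1 - L n) • v n‖) atTop (nhds c)) :
    Tendsto (fun n => ‖u n - v n‖) atTop (nhds 0) := by
  rw [Metric.tendsto_atTop]
  intro ε hε
  rcases eq_or_lt_of_le hc with hc0 | hcpos
  · -- c = 0
    have h1 := hu (ε/3) (by linarith)
    have h2 := hv (ε/3) (by linarith)
    obtain ⟨N, hN⟩ := (h1.and h2).exists_forall_of_atTop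
    refine ⟨N, fun n hn => ?_⟩
    obtain ⟨e1, e2⟩ := hN n hn
    rw [Real.dist_eq, sub_zero, abs_of_nonneg (norm_nonneg _)]
    have := norm_sub_le (u n) (v n)
    rw [← hc0] at e1 e2
    linarith
  · -- c > 0
    have hc1 : (0:ℝ) < c + 1 := by linarith
    obtain ⟨δ, hδpos, hδ1, hδ⟩ := uc_combo X (ε := ε / (c + 1)) (div_pos hε hc1)
    set β := ac * δ with hβ
    have hβpos : 0 < β := mul_pos hac hδpos
    set η := min 1 (c * β / 2) with hη
    have hηpos : 0 < η := lt_min one_pos (by positivity)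
    have hη1 : η ≤ 1 := min_le_left _ _
    have hcomb : ∀ᶠ n in atTop, c - c * β / 2 < ‖L n • u n + (1 - L n) • v n‖ :=
      hlim.eventually (eventually_gt_nhds (by nlinarith))
    have h1 := hu η hηpos
    have h2 := hv η hηpos
    obtain ⟨N, hN⟩ := ((h1.and h2).and hcomb).exists_forall_of_atTop
    refine ⟨N, fun n hn => ?_⟩
    obtain ⟨⟨e1, e2⟩, e3⟩ := hN n hn
    rw [Real.dist_eq, sub_zero, abs_of_nonneg (norm_nonneg _)]
    by_contra hcon
    push_neg at hcon
    have hL0 : 0 ≤ L n := le_trans hac.le (hL n).1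
    have hL1 : L n ≤ 1 := by have := (hL n).2; linarith
    have hRpos : (0:ℝ) < c + η := by linarith
    have hεR : ε / (c + 1) * (c + η) ≤ ‖u n - v n‖ := by
      have : ε / (c + 1) * (c + η) ≤ ε / (c + 1) * (c + 1) := by
        apply mul_le_mul_of_nonneg_left (by linarith) (by positivity)
      rw [div_mul_cancel₀ _ hc1.ne'] at this
      linarith
    have hb := hδ (u n) (v n) (c + η) (L n) hRpos e1 e2 hεR hL0 hL1
    have hmin : ac ≤ min (L n) (1 - L n) := le_min (hL n).1 (hL n).2
    have hminδ : β ≤ min (L n) (1 - L n) * δ := mul_le_mul_of_nonneg_right hmin hδpos.le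
    have hfin : (c + η) * (1 - min (L n) (1 - L n) * δ) ≤ (c + η) * (1 - β) :=
      mul_le_mul_of_nonneg_left (by linarith) hRpos.le
    have hηβ : η ≤ c * β / 2 := min_le_right _ _
    nlinarith

lemma seq_converges {d s r : ℕ → ℝ} (hd : ∀ n, 0 ≤ d n) (hs : ∀ n, 0 ≤ s n)
    (hr : ∀ n, 0 ≤ r n) (hssum : Summable s) (hrsum : Summable r)
    (hrec : ∀ n, d (n + 1) ≤ (1 + s n) * d n + r n) :
    ∃ c, 0 ≤ c ∧ Tendsto d atTop (nhds c) := by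
  set B : ℝ := (d 0 + ∑' n, r n) * Real.exp (∑' n, s n) with hB
  have hrt : 0 ≤ ∑' n, r n := tsum_nonneg hr
  have hst : 0 ≤ ∑' n, s n := tsum_nonneg hs
  have hB0 : 0 ≤ B := mul_nonneg (by linarith [hd 0]) (Real.exp_pos _).le
  have hprod1 : ∀ n, (1:ℝ) ≤ ∏ k ∈ Finset.range n, (1 + s k) := by
    intro n
    calc (1:ℝ) = ∏ _k ∈ Finset.range n, 1 := by simp
      _ ≤ ∏ k ∈ Finset.range n, (1 + s k) :=
          Finset.prod_le_prod (fun k _ => zero_le_one) (fun k _ => by linarith [hs k])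
  have hstep : ∀ n, d n ≤ (d 0 + ∑ k ∈ Finset.range n, r k) * ∏ k ∈ Finset.range n, (1 + s k) := by
    intro n
    induction n with
    | zero => simp
    | succ n ih =>
      have h1 : d (n+1) ≤ (1 + s n) * d n + r n := hrec n
      have h2 : (1 + s n) * d n ≤ (1 + s n) * ((d 0 + ∑ k ∈ Finset.range n, r k) *
          ∏ k ∈ Finset.range n, (1 + s k)) :=
        mul_le_mul_of_nonneg_left ih (by linarith [hs n])
      rw [Finset.sum_range_succ, Finset.prod_range_succ]
      have h3 : (1:ℝ) ≤ (∏ k ∈ Finset.range n, (1 + s k)) * (1 + s n) := by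
        calc (1:ℝ) ≤ ∏ k ∈ Finset.range n, (1 + s k) := hprod1 n
          _ ≤ _ := le_mul_of_one_le_right (by linarith [hprod1 n]) (by linarith [hs n])
      have h4 : 0 ≤ d 0 + ∑ k ∈ Finset.range n, r k :=
        add_nonneg (hd 0) (Finset.sum_nonneg fun k _ => hr k)
      nlinarith [hr n, hs n, Finset.sum_nonneg (fun k (_ : k ∈ Finset.range n) => hr k),
        hprod1 n, hd n]
  have hbdd : ∀ n, d n ≤ B := by
    intro n
    refine le_trans (hstep n) ?_
    have e1 : d 0 + ∑ k ∈ Finset.range n, r k ≤ d 0 + ∑' k, r k := by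
      gcongr
      exact Summable.sum_le_tsum _ (fun k _ => hr k) hrsum
    have e2 : ∏ k ∈ Finset.range n, (1 + s k) ≤ Real.exp (∑' k, s k) := by
      calc ∏ k ∈ Finset.range n, (1 + s k) ≤ ∏ k ∈ Finset.range n, Real.exp (s k) := by
            apply Finset.prod_le_prod (fun k _ => by linarith [hs k])
            intro k _
            linarith [Real.add_one_le_exp (s k)]
        _ = Real.exp (∑ k ∈ Finset.range n, s k) := (Real.exp_sum _ _).symm
        _ ≤ Real.exp (∑' k, s k) := by
            apply Real.exp_le_exp.2
            exact Summable.sum_le_tsum _ (fun k _ => hs k) hssum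
    have h4 : 0 ≤ d 0 + ∑ k ∈ Finset.range n, r k :=
      add_nonneg (hd 0) (Finset.sum_nonneg fun k _ => hr k)
    calc (d 0 + ∑ k ∈ Finset.range n, r k) * ∏ k ∈ Finset.range n, (1 + s k)
        ≤ (d 0 + ∑' k, r k) * Real.exp (∑' k, s k) :=
          mul_le_mul e1 e2 (le_trans zero_le_one (hprod1 n)) (by linarith [hd 0])
      _ = B := rfl
  -- now the telescoping argument
  set t : ℕ → ℝ := fun n => s n * B + r n with ht
  have ht0 : ∀ n, 0 ≤ t n := fun n => add_nonneg (mul_nonneg (hs n) hB0) (hr n)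
  have htsum : Summable t := (hssum.mul_right B).add hrsum
  have hrec' : ∀ n, d (n + 1) ≤ d n + t n := by
    intro n
    have h1 := hrec n
    have h2 : s n * d n ≤ s n * B := mul_le_mul_of_nonneg_left (hbdd n) (hs n)
    have : (1 + s n) * d n = d n + s n * d n := by ring
    rw [this] at h1
    simp only [ht]
    linarith
  set W : ℕ → ℝ := fun n => ∑' k, t (k + n) with hW
  have hWsummable : ∀ n, Summable (fun k => t (k + n)) := fun n =>
    (summable_nat_add_iff n).2 htsum
  have hWrec : ∀ n, W n = t n + W (n + 1) := by
    intro n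
    have := (hWsummable n).sum_add_tsum_nat_add 1
    simp only [Finset.sum_range_one, zero_add] at this
    have heq : (fun i => t (i + 1 + n)) = fun i => t (i + (n + 1)) := by
      funext i; congr 1; omega
    show (∑' k, t (k + n)) = t n + ∑' k, t (k + (n + 1))
    rw [← heq]
    exact this.symm
  have hW0 : ∀ n, 0 ≤ W n := fun n => tsum_nonneg (fun k => ht0 _)
  set e : ℕ → ℝ := fun n => d n + W n with he
  have hanti : Antitone e := by
    apply antitone_nat_of_succ_le
    intro n
    simp only [he]
    have h1 := hrec' n
    have h2 := hWrec n
    linarith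
  have hbdd' : BddBelow (Set.range e) := by
    refine ⟨0, ?_⟩
    rintro z ⟨n, rfl⟩
    exact add_nonneg (hd n) (hW0 n)
  have helim : Tendsto e atTop (nhds (⨅ n, e n)) := tendsto_atTop_ciInf hanti hbdd'
  have hWlim : Tendsto W atTop (nhds 0) := tendsto_sum_nat_add t
  refine ⟨⨅ n, e n, ?_, ?_⟩
  · exact le_ciInf fun n => add_nonneg (hd n) (hW0 n)
  · have : Tendsto (fun n => e n - W n) atTop (nhds ((⨅ n, e n) - 0)) := helim.sub hWlim
    simp only [sub_zero] at this
    convert this using 2 with n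
    simp [he]



lemma conv_norm_le {X : Type*} [NormedAddCommGroup X] [NormedSpace ℝ X] {ι : Type*}
    (s : Finset ι) (c : ι → ℝ) (z : ι → X) (Tb : ℝ)
    (h0 : ∀ j ∈ s, 0 ≤ c j) (hz : ∀ j ∈ s, ‖z j‖ ≤ Tb) :
    ‖∑ j ∈ s, c j • z j‖ ≤ (∑ j ∈ s, c j) * Tb := by
  calc ‖∑ j ∈ s, c j • z j‖ ≤ ∑ j ∈ s, ‖c j • z j‖ := norm_sum_le _ _
    _ ≤ ∑ j ∈ s, c j * Tb := Finset.sum_le_sum (fun j hj => by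
        rw [norm_smul, Real.norm_of_nonneg (h0 j hj)]
        exact mul_le_mul_of_nonneg_left (hz j hj) (h0 j hj))
    _ = (∑ j ∈ s, c j) * Tb := (Finset.sum_mul _ _ _).symm


set_option maxHeartbeats 1000000 in
/-- under the bounded-coefficient scheme hypotheses with all maps
continuous, `lim ‖x n - (T i)ⁿ (y n)‖ = 0` for each `i`. -/
theorem stmt9
    {X : Type*} [NormedAddCommGroup X] [NormedSpace ℝ X] [CompleteSpace X]
    [UniformConvexSpace X]
    {K : Set X} (hKne : K.Nonempty) (hKcl : IsClosed K) (hKco : Convex ℝ K)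
    {m : ℕ} (hm : 1 ≤ m)
    (T I : Fin m → X → X)
    (hTK : ∀ i, Set.MapsTo (T i) K K) (hIK : ∀ i, Set.MapsTo (I i) K K)
    (hTcont : ∀ i, ContinuousOn (T i) K) (hIcont : ∀ i, ContinuousOn (I i) K)
    (μ lam tμ tlam : Fin m → ℕ → ℝ)
    (hμ0 : ∀ i n, 0 ≤ μ i n) (hlam0 : ∀ i n, 0 ≤ lam i n)
    (htμ0 : ∀ i n, 0 ≤ tμ i n) (htlam0 : ∀ i n, 0 ≤ tlam i n)
    (hμlim : ∀ i, Tendsto (μ i) atTop (nhds 0)) (hlamlim : ∀ i, Tendsto (lam i) atTop (nhds 0))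
    (htμlim : ∀ i, Tendsto (tμ i) atTop (nhds 0))
    (htlamlim : ∀ i, Tendsto (tlam i) atTop (nhds 0))
    (hμsum : ∀ i, Summable (μ i)) (hlamsum : ∀ i, Summable (lam i))
    (htμsum : ∀ i, Summable (tμ i)) (htlamsum : ∀ i, Summable (tlam i))
    (φ ψ : Fin m → ℝ → ℝ)
    (hφmono : ∀ i, StrictMonoOn (φ i) (Set.Ici 0))
    (hφcont : ∀ i, ContinuousOn (φ i) (Set.Ici 0))
    (hφ0 : ∀ i, φ i 0 = 0) (hφpos : ∀ i t, 0 ≤ t → 0 ≤ φ i t)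
    (hψmono : ∀ i, StrictMonoOn (ψ i) (Set.Ici 0))
    (hψcont : ∀ i, ContinuousOn (ψ i) (Set.Ici 0))
    (hψ0 : ∀ i, ψ i 0 = 0) (hψpos : ∀ i t, 0 ≤ t → 0 ≤ ψ i t)
    (hI : ∀ i, ∀ n, 1 ≤ n → ∀ x ∈ K, ∀ y ∈ K,
      ‖(I i)^[n] x - (I i)^[n] y‖ ≤ ‖x - y‖ + tμ i n * ψ i ‖x - y‖ + tlam i n)
    (hT : ∀ i, ∀ n, 1 ≤ n → ∀ x ∈ K, ∀ y ∈ K,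
      ‖(T i)^[n] x - (T i)^[n] y‖ ≤
        ‖(I i)^[n] x - (I i)^[n] y‖ + μ i n * φ i ‖(I i)^[n] x - (I i)^[n] y‖ + lam i n)
    (F : Set X)
    (hFdef : ∀ p, p ∈ F ↔ p ∈ K ∧ ∀ i, T i p = p ∧ I i p = p)
    (hFne : F.Nonempty)
    (M Ms N Ns : Fin m → ℝ)
    (hM : ∀ i, 0 < M i) (hMs : ∀ i, 0 < Ms i) (hN : ∀ i, 0 < N i) (hNs : ∀ i, 0 < Ns i)
    (hφbound : ∀ i ξ, M i ≤ ξ → φ i ξ ≤ Ms i * ξ)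
    (hψbound : ∀ i ζ, N i ≤ ζ → ψ i ζ ≤ Ns i * ζ)
    (alo ahi blo bhi : ℝ)
    (halo : 0 < alo) (hahi : alo < ahi) (hahi1 : ahi < 1)
    (hblo : 0 < blo) (hbhi : blo < bhi) (hbhi1 : bhi < 1)
    (a b : Fin (m + 1) → ℕ → ℝ)
    (ha : ∀ j n, a j n ∈ Set.Icc alo ahi) (hb : ∀ j n, b j n ∈ Set.Icc blo bhi)
    (hasum : ∀ n, ∑ j, a j n = 1) (hbsum : ∀ n, ∑ j, b j n = 1)
    (x y : ℕ → X) (hx0 : x 0 ∈ K)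
    (hy : ∀ n, y n = b 0 n • x n + ∑ i : Fin m, b i.succ n • (I i)^[n] (x n))
    (hxrec : ∀ n, x (n + 1) = a 0 n • x n + ∑ i : Fin m, a i.succ n • (T i)^[n] (y n))
    : ∀ i, Tendsto (fun n => ‖x n - (T i)^[n] (y n)‖) atTop (nhds 0) := by
  classical
  -- fixed point
  obtain ⟨p, hpF⟩ := hFne
  obtain ⟨hpK, hpTI⟩ := (hFdef p).1 hpF
  have hIp : ∀ i n, (I i)^[n] p = p := fun i n => Function.iterate_fixed (hpTI i).2 n
  have hTp : ∀ i n, (T i)^[n] p = p := fun i n => Function.iterate_fixed (hpTI i).1 n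
  have hb0 : ∀ j n, 0 ≤ b j n := fun j n => le_trans hblo.le (hb j n).1
  have ha0 : ∀ j n, 0 ≤ a j n := fun j n => le_trans halo.le (ha j n).1
  -- membership
  have comb : ∀ (c : Fin (m+1) → ℝ) (z : Fin (m+1) → X), (∀ j, 0 ≤ c j) → (∑ j, c j) = 1 →
      (∀ j, z j ∈ K) → (c 0 • z 0 + ∑ i : Fin m, c i.succ • z i.succ) ∈ K := by
    intro c z h0 h1 hz
    rw [← Fin.sum_univ_succ (fun j => c j • z j)]
    exact hKco.sum_mem (fun j _ => h0 j) h1 (fun j _ => hz j)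
  have hyK' : ∀ n, x n ∈ K → y n ∈ K := by
    intro n hxn
    rw [hy n]
    have := comb (fun j => b j n) (Fin.cases (x n) (fun i => (I i)^[n] (x n)))
      (fun j => hb0 j n) (hbsum n)
      (fun j => by
        induction j using Fin.cases with
        | zero => simpa using hxn
        | succ i => simpa using ((hIK i).iterate n) hxn)
    simpa using this
  have hxK : ∀ n, x n ∈ K := by
    intro n
    induction n with
    | zero => exact hx0
    | succ n ih =>
      rw [hxrec n]
      have := comb (fun j => a j n) (Fin.cases (x n) (fun i => (T i)^[n] (y n)))
        (fun j => ha0 j n) (hasum n)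
        (fun j => by
          induction j using Fin.cases with
          | zero => simpa using ih
          | succ i => simpa using ((hTK i).iterate n) (hyK' n ih))
      simpa using this
  have hyK : ∀ n, y n ∈ K := fun n => hyK' n (hxK n)
  -- gauge linear bounds
  set Aφ : Fin m → ℝ := fun i => φ i (M i) with hAφdef
  set Aψ : Fin m → ℝ := fun i => ψ i (N i) with hAψdef
  have hAφ0 : ∀ i, 0 ≤ Aφ i := fun i => hφpos i _ (hM i).le
  have hAψ0 : ∀ i, 0 ≤ Aψ i := fun i => hψpos i _ (hN i).le
  have φbd : ∀ i t, 0 ≤ t → φ i t ≤ Aφ i + Ms i * t := by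
    intro i t ht
    rcases le_total t (M i) with h | h
    · have h1 := (hφmono i).monotoneOn (Set.mem_Ici.2 ht) (Set.mem_Ici.2 (hM i).le) h
      have h2 : 0 ≤ Ms i * t := mul_nonneg (hMs i).le ht
      simp only [hAφdef]; linarith
    · have h1 := hφbound i t h
      have h2 := hAφ0 i
      linarith
  have ψbd : ∀ i t, 0 ≤ t → ψ i t ≤ Aψ i + Ns i * t := by
    intro i t ht
    rcases le_total t (N i) with h | h
    · have h1 := (hψmono i).monotoneOn (Set.mem_Ici.2 ht) (Set.mem_Ici.2 (hN i).le) h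
      have h2 : 0 ≤ Ns i * t := mul_nonneg (hNs i).le ht
      simp only [hAψdef]; linarith
    · have h1 := hψbound i t h
      have h2 := hAψ0 i
      linarith
  -- the summable control sequences
  set σ : ℕ → ℝ := fun n =>
    ∑ i : Fin m, (μ i n * Ms i + tμ i n * Ns i + μ i n * Ms i * (tμ i n * Ns i)) with hσdef
  set ρ : ℕ → ℝ := fun n =>
    ∑ i : Fin m, ((1 + μ i n * Ms i) * (tμ i n * Aψ i + tlam i n) + (μ i n * Aφ i + lam i n))
    with hρdef
  have hterm0 : ∀ (i : Fin m) n, 0 ≤ μ i n * Ms i + tμ i n * Ns i + μ i n * Ms i * (tμ i n * Ns i) := by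
    intro i n
    have a0 : 0 ≤ μ i n * Ms i := mul_nonneg (hμ0 i n) (hMs i).le
    have b0 : 0 ≤ tμ i n * Ns i := mul_nonneg (htμ0 i n) (hNs i).le
    have := mul_nonneg a0 b0
    linarith
  have htermρ0 : ∀ (i : Fin m) n,
      0 ≤ (1 + μ i n * Ms i) * (tμ i n * Aψ i + tlam i n) + (μ i n * Aφ i + lam i n) := by
    intro i n
    have a0 : 0 ≤ μ i n * Ms i := mul_nonneg (hμ0 i n) (hMs i).le
    have b0 : 0 ≤ tμ i n * Aψ i + tlam i n :=
      add_nonneg (mul_nonneg (htμ0 i n) (hAψ0 i)) (htlam0 i n)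
    have c0 : 0 ≤ μ i n * Aφ i + lam i n :=
      add_nonneg (mul_nonneg (hμ0 i n) (hAφ0 i)) (hlam0 i n)
    nlinarith
  have hσ0 : ∀ n, 0 ≤ σ n := fun n => Finset.sum_nonneg fun i _ => hterm0 i n
  have hρ0 : ∀ n, 0 ≤ ρ n := fun n => Finset.sum_nonneg fun i _ => htermρ0 i n
  have hterm : ∀ (i : Fin m) n,
      μ i n * Ms i + tμ i n * Ns i + μ i n * Ms i * (tμ i n * Ns i) ≤ σ n := fun i n =>
    Finset.single_le_sum (fun j _ => hterm0 j n) (Finset.mem_univ i)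
  have htermρ : ∀ (i : Fin m) n,
      (1 + μ i n * Ms i) * (tμ i n * Aψ i + tlam i n) + (μ i n * Aφ i + lam i n) ≤ ρ n :=
    fun i n => Finset.single_le_sum (fun j _ => htermρ0 j n) (Finset.mem_univ i)
  -- boundedness helper
  have hbddC : ∀ (f : ℕ → ℝ), Tendsto f atTop (nhds 0) → ∃ C, 0 ≤ C ∧ ∀ n, f n ≤ C := by
    intro f hf
    obtain ⟨C, hC⟩ := hf.bddAbove_range
    exact ⟨max C 0, le_max_right _ _, fun n => le_trans (hC ⟨n, rfl⟩) (le_max_left _ _)⟩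
  have hσsum : Summable σ := by
    apply summable_sum
    intro i _
    have h1 : Summable (fun n => μ i n * Ms i) := (hμsum i).mul_right _
    have h2 : Summable (fun n => tμ i n * Ns i) := (htμsum i).mul_right _
    have h3 : Summable (fun n => μ i n * Ms i * (tμ i n * Ns i)) := by
      obtain ⟨C, hC0, hC⟩ := hbddC (fun n => tμ i n * Ns i)
        (by simpa using (htμlim i).mul_const (Ns i))
      refine Summable.of_nonneg_of_le
        (fun n => mul_nonneg (mul_nonneg (hμ0 i n) (hMs i).le)
          (mul_nonneg (htμ0 i n) (hNs i).le))
        (fun n => ?_) (h1.mul_right C)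
      exact mul_le_mul_of_nonneg_left (hC n) (mul_nonneg (hμ0 i n) (hMs i).le)
    exact (h1.add h2).add h3
  have hρsum : Summable ρ := by
    apply summable_sum
    intro i _
    have h1 : Summable (fun n => tμ i n * Aψ i + tlam i n) :=
      ((htμsum i).mul_right _).add (htlamsum i)
    have h2 : Summable (fun n => μ i n * Ms i * (tμ i n * Aψ i + tlam i n)) := by
      obtain ⟨C, hC0, hC⟩ := hbddC (fun n => tμ i n * Aψ i + tlam i n)
        (by simpa using ((htμlim i).mul_const (Aψ i)).add (htlamlim i))
      refine Summable.of_nonneg_of_le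
        (fun n => mul_nonneg (mul_nonneg (hμ0 i n) (hMs i).le)
          (add_nonneg (mul_nonneg (htμ0 i n) (hAψ0 i)) (htlam0 i n)))
        (fun n => ?_) (((hμsum i).mul_right (Ms i)).mul_right C)
      exact mul_le_mul_of_nonneg_left (hC n) (mul_nonneg (hμ0 i n) (hMs i).le)
    have h3 : Summable (fun n => μ i n * Aφ i + lam i n) :=
      ((hμsum i).mul_right _).add (hlamsum i)
    exact Summable.congr ((h1.add h2).add h3) (fun n => by ring)
  have hσlim : Tendsto σ atTop (nhds 0) := hσsum.tendsto_atTop_zero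
  have hρlim : Tendsto ρ atTop (nhds 0) := hρsum.tendsto_atTop_zero
  -- core pointwise bounds
  have hIb : ∀ (i : Fin m) n, 1 ≤ n → ∀ z ∈ K, ‖(I i)^[n] z - p‖ ≤
      (1 + tμ i n * Ns i) * ‖z - p‖ + (tμ i n * Aψ i + tlam i n) := by
    intro i n hn z hz
    have h1 := hI i n hn z hz p hpK
    rw [hIp i n] at h1
    have h2 : ψ i ‖z - p‖ ≤ Aψ i + Ns i * ‖z - p‖ := ψbd i _ (norm_nonneg _)
    have h3 : tμ i n * ψ i ‖z - p‖ ≤ tμ i n * (Aψ i + Ns i * ‖z - p‖) :=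
      mul_le_mul_of_nonneg_left h2 (htμ0 i n)
    nlinarith [norm_nonneg (z - p)]
  have hTb : ∀ (i : Fin m) n, 1 ≤ n → ∀ z ∈ K,
      ‖(T i)^[n] z - p‖ ≤ (1 + σ n) * ‖z - p‖ + ρ n := by
    intro i n hn z hz
    have h1 := hT i n hn z hz p hpK
    rw [hIp i n, hTp i n] at h1
    have hQ0 : (0:ℝ) ≤ ‖(I i)^[n] z - p‖ := norm_nonneg _
    have h2 := hIb i n hn z hz
    have h3 : φ i ‖(I i)^[n] z - p‖ ≤ Aφ i + Ms i * ‖(I i)^[n] z - p‖ := φbd i _ hQ0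
    have h4 : μ i n * φ i ‖(I i)^[n] z - p‖ ≤ μ i n * (Aφ i + Ms i * ‖(I i)^[n] z - p‖) :=
      mul_le_mul_of_nonneg_left h3 (hμ0 i n)
    have h5 : ‖(T i)^[n] z - p‖ ≤ (1 + μ i n * Ms i) * ‖(I i)^[n] z - p‖ +
        (μ i n * Aφ i + lam i n) := by nlinarith
    have h6 : (1 + μ i n * Ms i) * ‖(I i)^[n] z - p‖ ≤ (1 + μ i n * Ms i) *
        ((1 + tμ i n * Ns i) * ‖z - p‖ + (tμ i n * Aψ i + tlam i n)) := by
      apply mul_le_mul_of_nonneg_left h2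
      nlinarith [mul_nonneg (hμ0 i n) (hMs i).le]
    have h7 : (μ i n * Ms i + tμ i n * Ns i + μ i n * Ms i * (tμ i n * Ns i)) * ‖z - p‖
        ≤ σ n * ‖z - p‖ := mul_le_mul_of_nonneg_right (hterm i n) (norm_nonneg _)
    have h8 := htermρ i n
    nlinarith [norm_nonneg (z - p)]
  -- convex combination subtraction helper
  have sum_sub : ∀ (c : Fin (m+1) → ℝ) (z : Fin (m+1) → X), (∑ j, c j) = 1 →
      ∑ j : Fin (m+1), c j • (z j - p) = (∑ j : Fin (m+1), c j • z j) - p := by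
    intro c z h1
    calc ∑ j : Fin (m+1), c j • (z j - p) = ∑ j : Fin (m+1), (c j • z j - c j • p) := by
          simp [smul_sub]
      _ = (∑ j : Fin (m+1), c j • z j) - ∑ j : Fin (m+1), c j • p := Finset.sum_sub_distrib _ _
      _ = _ := by rw [← Finset.sum_smul, h1, one_smul]
  set d : ℕ → ℝ := fun n => ‖x n - p‖ with hddef
  have hd0 : ∀ n, 0 ≤ d n := fun n => norm_nonneg _
  set D : ℕ → ℝ := fun n => (1 + σ n) * ((1 + σ n) * d n + ρ n) + ρ n with hDdef
  -- bound for y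
  have hyb : ∀ n, 1 ≤ n → ‖y n - p‖ ≤ (1 + σ n) * d n + ρ n := by
    intro n hn
    have hyeq : y n = ∑ j : Fin (m+1), b j n •
        (Fin.cases (x n) (fun i => (I i)^[n] (x n)) j : X) := by
      rw [hy n, Fin.sum_univ_succ]
      simp
    have h1 : y n - p = ∑ j : Fin (m+1), b j n •
        ((Fin.cases (x n) (fun i => (I i)^[n] (x n)) j : X) - p) := by
      rw [sum_sub (fun j => b j n) _ (hbsum n), ← hyeq]
    rw [h1]
    have h2 : ∀ j : Fin (m+1),
        ‖(Fin.cases (x n) (fun i => (I i)^[n] (x n)) j : X) - p‖ ≤ (1 + σ n) * d n + ρ n := by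
      intro j
      induction j using Fin.cases with
      | zero =>
        simp only [Fin.cases_zero]
        have h3 : 0 ≤ σ n * d n := mul_nonneg (hσ0 n) (hd0 n)
        have := hρ0 n
        simp only [hddef]
        nlinarith [hd0 n]
      | succ i =>
        simp only [Fin.cases_succ]
        have h3 := hIb i n hn (x n) (hxK n)
        have e1 : tμ i n * Ns i ≤ σ n := by
          refine le_trans ?_ (hterm i n)
          have a0 : 0 ≤ μ i n * Ms i := mul_nonneg (hμ0 i n) (hMs i).le
          have b0 : 0 ≤ tμ i n * Ns i := mul_nonneg (htμ0 i n) (hNs i).le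
          nlinarith
        have e2 : tμ i n * Aψ i + tlam i n ≤ ρ n := by
          refine le_trans ?_ (htermρ i n)
          have a0 : 0 ≤ μ i n * Ms i := mul_nonneg (hμ0 i n) (hMs i).le
          have b0 : 0 ≤ tμ i n * Aψ i + tlam i n :=
            add_nonneg (mul_nonneg (htμ0 i n) (hAψ0 i)) (htlam0 i n)
          have c0 : 0 ≤ μ i n * Aφ i + lam i n :=
            add_nonneg (mul_nonneg (hμ0 i n) (hAφ0 i)) (hlam0 i n)
          nlinarith
        have e3 : (tμ i n * Ns i) * ‖x n - p‖ ≤ σ n * ‖x n - p‖ :=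
          mul_le_mul_of_nonneg_right e1 (norm_nonneg _)
        simp only [hddef]
        nlinarith [norm_nonneg (x n - p)]
    calc ‖∑ j : Fin (m+1), b j n •
        ((Fin.cases (x n) (fun i => (I i)^[n] (x n)) j : X) - p)‖
        ≤ (∑ j : Fin (m+1), b j n) * ((1 + σ n) * d n + ρ n) :=
          conv_norm_le _ _ _ _ (fun j _ => hb0 j n) (fun j _ => h2 j)
      _ = (1 + σ n) * d n + ρ n := by rw [hbsum n, one_mul]
  -- w sequence
  set w : Fin (m+1) → ℕ → X := fun j n => Fin.cases (x n) (fun i => (T i)^[n] (y n)) j with hwdef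
  have hwb : ∀ (j : Fin (m+1)) n, 1 ≤ n → ‖w j n - p‖ ≤ D n := by
    intro j n hn
    induction j using Fin.cases with
    | zero =>
      simp only [hwdef, Fin.cases_zero, hDdef, hddef]
      nlinarith [hσ0 n, hρ0 n, norm_nonneg (x n - p),
        mul_nonneg (hσ0 n) (norm_nonneg (x n - p)),
        mul_nonneg (mul_nonneg (hσ0 n) (hσ0 n)) (norm_nonneg (x n - p)),
        mul_nonneg (hσ0 n) (hρ0 n)]
    | succ i =>
      simp only [hwdef, Fin.cases_succ, hDdef]
      have h1 := hTb i n hn (y n) (hyK n)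
      have h2 := hyb n hn
      have h3 : (1 + σ n) * ‖y n - p‖ ≤ (1 + σ n) * ((1 + σ n) * d n + ρ n) :=
        mul_le_mul_of_nonneg_left h2 (by linarith [hσ0 n])
      linarith
  have hxw : ∀ n, x (n+1) = ∑ j : Fin (m+1), a j n • w j n := by
    intro n
    rw [hxrec n, Fin.sum_univ_succ]
    simp [hwdef]
  have hxwp : ∀ n, x (n+1) - p = ∑ j : Fin (m+1), a j n • (w j n - p) := by
    intro n
    rw [hxw n, ← sum_sub (fun j => a j n) (fun j => w j n) (hasum n)]
  -- x 1 = x 0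
  have hy0 : y 0 = x 0 := by
    rw [hy 0]
    simp only [Function.iterate_zero_apply]
    rw [← Finset.sum_smul, ← add_smul]
    have h1 : b 0 0 + ∑ i : Fin m, b i.succ 0 = 1 := by
      have := hbsum 0; rwa [Fin.sum_univ_succ] at this
    rw [h1, one_smul]
  have hx1 : x 1 = x 0 := by
    rw [hxrec 0, hy0]
    simp only [Function.iterate_zero_apply]
    rw [← Finset.sum_smul, ← add_smul]
    have h1 : a 0 0 + ∑ i : Fin m, a i.succ 0 = 1 := by
      have := hasum 0; rwa [Fin.sum_univ_succ] at this
    rw [h1, one_smul]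
  -- recursion for d
  have hdrec : ∀ n, d (n+1) ≤ (1 + (2 * σ n + σ n * σ n)) * d n + (2 + σ n) * ρ n := by
    intro n
    rcases Nat.eq_zero_or_pos n with rfl | hn
    · have hd10 : d 1 = d 0 := by simp only [hddef]; rw [hx1]
      rw [hd10]
      have h4 : 0 ≤ σ 0 * d 0 := mul_nonneg (hσ0 0) (hd0 0)
      nlinarith [hσ0 0, hρ0 0, hd0 0, mul_nonneg (mul_nonneg (hσ0 0) (hσ0 0)) (hd0 0),
        mul_nonneg (hσ0 0) (hρ0 0)]
    · have h1 : d (n+1) ≤ D n := by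
        show ‖x (n+1) - p‖ ≤ D n
        rw [hxwp n]
        calc ‖∑ j : Fin (m+1), a j n • (w j n - p)‖ ≤ (∑ j : Fin (m+1), a j n) * D n :=
              conv_norm_le _ _ _ _ (fun j _ => ha0 j n) (fun j _ => hwb j n hn)
          _ = D n := by rw [hasum n, one_mul]
      have h2 : D n = (1 + (2 * σ n + σ n * σ n)) * d n + (2 + σ n) * ρ n := by
        simp only [hDdef]; ring
      linarith
  -- convergence of d
  have hs'0 : ∀ n, 0 ≤ 2 * σ n + σ n * σ n := fun n => by nlinarith [hσ0 n]
  have hr'0 : ∀ n, 0 ≤ (2 + σ n) * ρ n := fun n =>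
    mul_nonneg (by linarith [hσ0 n]) (hρ0 n)
  obtain ⟨Cσ, hCσ0, hCσ⟩ := hbddC σ hσlim
  have hs'sum : Summable (fun n => 2 * σ n + σ n * σ n) := by
    refine Summable.add (hσsum.mul_left 2) ?_
    refine Summable.of_nonneg_of_le (fun n => mul_nonneg (hσ0 n) (hσ0 n))
      (fun n => mul_le_mul_of_nonneg_left (hCσ n) (hσ0 n)) (hσsum.mul_right Cσ)
  have hr'sum : Summable (fun n => (2 + σ n) * ρ n) := by
    refine Summable.of_nonneg_of_le hr'0 (fun n => ?_) (hρsum.mul_left (2 + Cσ))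
    have : (2 + σ n) ≤ 2 + Cσ := by linarith [hCσ n]
    exact mul_le_mul_of_nonneg_right this (hρ0 n)
  obtain ⟨c, hc0, hdlim⟩ := seq_converges hd0 hs'0 hr'0 hs'sum hr'sum hdrec
  -- D tends to c
  have hDlim : Tendsto D atTop (nhds c) := by
    have h : Tendsto (fun n => (1 + σ n) * ((1 + σ n) * d n + ρ n) + ρ n) atTop
        (nhds ((1 + 0) * ((1 + 0) * c + 0) + 0)) :=
      (((tendsto_const_nhds.add hσlim).mul
        (((tendsto_const_nhds.add hσlim).mul hdlim).add hρlim)).add hρlim)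
    simpa using h
  -- the Schu argument for each component
  set ac := min alo (1 - ahi) with hacdef
  have hacpos : 0 < ac := lt_min halo (by linarith)
  have hclose : ∀ j : Fin (m+1), Tendsto (fun n => ‖w j n - x (n+1)‖) atTop (nhds 0) := by
    intro j
    have hL : ∀ n, ac ≤ a j n ∧ ac ≤ 1 - a j n := fun n =>
      ⟨le_trans (min_le_left _ _) (ha j n).1,
       le_trans (min_le_right _ _) (by linarith [(ha j n).2])⟩
    have hLlt1 : ∀ n, 0 < 1 - a j n := fun n => lt_of_lt_of_le hacpos (hL n).2
    set u : ℕ → X := fun n => w j n - p with hudef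
    set v : ℕ → X := fun n =>
      (1 - a j n)⁻¹ • (∑ j' ∈ Finset.univ.erase j, a j' n • (w j' n - p)) with hvdef
    have hid : ∀ n, a j n • u n + (1 - a j n) • v n = x (n+1) - p := by
      intro n
      have h1 : (1 - a j n) • v n = ∑ j' ∈ Finset.univ.erase j, a j' n • (w j' n - p) := by
        simp only [hvdef]
        rw [smul_inv_smul₀ (hLlt1 n).ne']
      rw [h1, hudef]
      show a j n • (w j n - p) + _ = _
      rw [Finset.add_sum_erase Finset.univ (fun j' => a j' n • (w j' n - p)) (Finset.mem_univ j)]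
      exact (hxwp n).symm
    have herase_sum : ∀ n, ∑ j' ∈ Finset.univ.erase j, a j' n = 1 - a j n := by
      intro n
      have h := Finset.add_sum_erase Finset.univ (fun j' => a j' n) (Finset.mem_univ j)
      rw [hasum n] at h
      linarith
    have hvb : ∀ n, 1 ≤ n → ‖v n‖ ≤ D n := by
      intro n hn
      simp only [hvdef]
      rw [norm_smul, Real.norm_of_nonneg (inv_nonneg.2 (hLlt1 n).le)]
      have h1 : ‖∑ j' ∈ Finset.univ.erase j, a j' n • (w j' n - p)‖ ≤
          (∑ j' ∈ Finset.univ.erase j, a j' n) * D n :=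
        conv_norm_le _ _ _ _ (fun j' _ => ha0 j' n) (fun j' _ => hwb j' n hn)
      rw [herase_sum n] at h1
      calc (1 - a j n)⁻¹ * ‖∑ j' ∈ Finset.univ.erase j, a j' n • (w j' n - p)‖
          ≤ (1 - a j n)⁻¹ * ((1 - a j n) * D n) :=
            mul_le_mul_of_nonneg_left h1 (inv_nonneg.2 (hLlt1 n).le)
        _ = D n := by rw [inv_mul_cancel_left₀ (hLlt1 n).ne']
    have hDev : ∀ ε > (0:ℝ), ∀ᶠ n in atTop, D n ≤ c + ε := by
      intro ε hε
      have := hDlim.eventually (eventually_lt_nhds (show c < c + ε by linarith))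
      exact this.mono fun n h => h.le
    have huev : ∀ ε > (0:ℝ), ∀ᶠ n in atTop, ‖u n‖ ≤ c + ε := by
      intro ε hε
      filter_upwards [hDev ε hε, eventually_ge_atTop 1] with n h1 h2
      exact le_trans (hwb j n h2) h1
    have hvev : ∀ ε > (0:ℝ), ∀ᶠ n in atTop, ‖v n‖ ≤ c + ε := by
      intro ε hε
      filter_upwards [hDev ε hε, eventually_ge_atTop 1] with n h1 h2
      exact le_trans (hvb n h2) h1
    have hwlim : Tendsto (fun n => ‖a j n • u n + (1 - a j n) • v n‖) atTop (nhds c) := by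
      have heq : (fun n => ‖a j n • u n + (1 - a j n) • v n‖) = fun n => d (n+1) := by
        funext n
        rw [hid n]
      rw [heq]
      exact hdlim.comp (tendsto_add_atTop_nat 1)
    have hschu := schu hc0 hacpos hL huev hvev hwlim
    apply squeeze_zero (fun n => norm_nonneg _) (fun n => ?_) hschu
    have hval : w j n - x (n+1) = (1 - a j n) • (u n - v n) := by
      have h2 : (1 - a j n) • v n = x (n+1) - p - a j n • u n := by
        rw [← hid n]; abel
      rw [smul_sub, h2, hudef]
      show _ = (1 - a j n) • (w j n - p) - (x (n + 1) - p - a j n • (w j n - p))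
      module
    rw [hval, norm_smul, Real.norm_of_nonneg (hLlt1 n).le]
    nlinarith [norm_nonneg (u n - v n), (hL n).1, hacpos]
  -- conclusion
  intro i
  apply squeeze_zero (fun n => norm_nonneg _) (fun n => ?_)
    (show Tendsto (fun n => ‖w 0 n - x (n+1)‖ + ‖w i.succ n - x (n+1)‖) atTop (nhds 0) by
      simpa using (hclose 0).add (hclose i.succ))
  have hw0 : w 0 n = x n := by simp [hwdef]
  have hwi : w i.succ n = (T i)^[n] (y n) := by simp [hwdef]
  rw [hw0, hwi]
  calc ‖x n - (T i)^[n] (y n)‖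
      = ‖(x n - x (n+1)) - ((T i)^[n] (y n) - x (n+1))‖ := by rw [sub_sub_sub_cancel_right]
    _ ≤ ‖x n - x (n+1)‖ + ‖(T i)^[n] (y n) - x (n+1)‖ := norm_sub_le _ _
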